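/- Let D be a category with limits and colimits and T a finite time category. The functor K : Pe(T,D) → Cu(T,D) (colimit over subintervals) is left adjoint to the functor P : Cu(T,D) → Pe(T,D) (limit over subintervals). -/

import Mathlib

open CategoryTheory CategoryTheory.Limits

/-- Closed intervals `[a,b] ⊆ ℕ` (with `a ≤ b`), ordered by inclusion. -/
def NatInt : Type := {p : ℕ × ℕ // p.1 ≤ p.2}

instance : PartialOrder NatInt where
  le I J := J.val.1 ≤ I.val.1 ∧ I.val.2 ≤ J.val.2
  le_refl _ := ⟨le_rfl, le_rfl⟩
  le_trans _ _ _ h h' := ⟨le_trans h'.1 h.1, le_trans h.2 h'.2⟩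
  le_antisymm I J h h' := Subtype.ext (Prod.ext (le_antisymm h'.1 h.1) (le_antisymm h.2 h'.2))

/-- The closed interval `[a,b]`. -/
def NatInt.mk (a b : ℕ) (h : a ≤ b) : NatInt := ⟨(a, b), h⟩

lemma NatInt.mk_le_mk {a b c d : ℕ} {h : a ≤ b} {h' : c ≤ d}
    (h1 : c ≤ a) (h2 : b ≤ d) : NatInt.mk a b h ≤ NatInt.mk c d h' := ⟨h1, h2⟩

variable {D : Type*} [Category D]

/-- The sheaf condition (persistent narrative) for a presheaf on the poset of
closed intervals of `ℕ`, w.r.t. the Johnstone coverage. -/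
def IsPersistentNarr (F : NatIntᵒᵖ ⥤ D) : Prop :=
  ∀ (a p b : ℕ) (hap : a ≤ p) (hpb : p ≤ b),
    IsPullback
      (F.map (homOfLE (NatInt.mk_le_mk (h := hap) (h' := hap.trans hpb) le_rfl hpb)).op)
      (F.map (homOfLE (NatInt.mk_le_mk (h := hpb) (h' := hap.trans hpb) hap le_rfl)).op)
      (F.map (homOfLE (NatInt.mk_le_mk (h := le_rfl) (h' := hap) hap le_rfl)).op)
      (F.map (homOfLE (NatInt.mk_le_mk (h := le_rfl) (h' := hpb) le_rfl hpb)).op)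

/-- The cosheaf condition (cumulative narrative). -/
def IsCumulativeNarr (G : NatInt ⥤ D) : Prop :=
  ∀ (a p b : ℕ) (hap : a ≤ p) (hpb : p ≤ b),
    IsPushout
      (G.map (homOfLE (NatInt.mk_le_mk (h := le_rfl) (h' := hap) hap le_rfl)))
      (G.map (homOfLE (NatInt.mk_le_mk (h := le_rfl) (h' := hpb) le_rfl hpb)))
      (G.map (homOfLE (NatInt.mk_le_mk (h := hap) (h' := hap.trans hpb) le_rfl hpb)))
      (G.map (homOfLE (NatInt.mk_le_mk (h := hpb) (h' := hap.trans hpb) hap le_rfl)))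

/-- The join (smallest closed interval containing both). -/
def NatInt.sup (I J : NatInt) : NatInt :=
  ⟨(min I.val.1 J.val.1, max I.val.2 J.val.2),
    le_trans (min_le_left _ _) (le_trans I.2 (le_max_left _ _))⟩

/-- A set of intervals is a sub-join-semilattice if it is closed under joins. -/
def SupClosed' (S : Set NatInt) : Prop :=
  ∀ I ∈ S, ∀ J ∈ S, NatInt.sup I J ∈ S

/-- The sheaf condition for a presheaf on a sub-join-semilattice `S` of the
interval poset, for all Johnstone covers lying in `S`. -/
def IsPersistentOn (S : Set NatInt) {D : Type*} [Category D]
    (F : (↥S)ᵒᵖ ⥤ D) : Prop :=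
  ∀ (a p b : ℕ) (hap : a ≤ p) (hpb : p ≤ b)
    (hab : NatInt.mk a b (hap.trans hpb) ∈ S) (hl : NatInt.mk a p hap ∈ S)
    (hm : NatInt.mk p p le_rfl ∈ S) (hr : NatInt.mk p b hpb ∈ S),
    IsPullback
      (F.map (homOfLE (Subtype.mk_le_mk.mpr
        (NatInt.mk_le_mk (h := hap) (h' := hap.trans hpb) le_rfl hpb) :
        (⟨_, hl⟩ : ↥S) ≤ ⟨_, hab⟩)).op)
      (F.map (homOfLE (Subtype.mk_le_mk.mpr
        (NatInt.mk_le_mk (h := hpb) (h' := hap.trans hpb) hap le_rfl) :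
        (⟨_, hr⟩ : ↥S) ≤ ⟨_, hab⟩)).op)
      (F.map (homOfLE (Subtype.mk_le_mk.mpr
        (NatInt.mk_le_mk (h := le_rfl) (h' := hap) hap le_rfl) :
        (⟨_, hm⟩ : ↥S) ≤ ⟨_, hl⟩)).op)
      (F.map (homOfLE (Subtype.mk_le_mk.mpr
        (NatInt.mk_le_mk (h := le_rfl) (h' := hpb) le_rfl hpb) :
        (⟨_, hm⟩ : ↥S) ≤ ⟨_, hr⟩)).op)

/-- The cosheaf condition on a sub-join-semilattice `S`. -/
def IsCumulativeOn (S : Set NatInt) {D : Type*} [Category D]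
    (G : ↥S ⥤ D) : Prop :=
  ∀ (a p b : ℕ) (hap : a ≤ p) (hpb : p ≤ b)
    (hab : NatInt.mk a b (hap.trans hpb) ∈ S) (hl : NatInt.mk a p hap ∈ S)
    (hm : NatInt.mk p p le_rfl ∈ S) (hr : NatInt.mk p b hpb ∈ S),
    IsPushout
      (G.map (homOfLE (Subtype.mk_le_mk.mpr
        (NatInt.mk_le_mk (h := le_rfl) (h' := hap) hap le_rfl) :
        (⟨_, hm⟩ : ↥S) ≤ ⟨_, hl⟩)))
      (G.map (homOfLE (Subtype.mk_le_mk.mpr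
        (NatInt.mk_le_mk (h := le_rfl) (h' := hpb) le_rfl hpb) :
        (⟨_, hm⟩ : ↥S) ≤ ⟨_, hr⟩)))
      (G.map (homOfLE (Subtype.mk_le_mk.mpr
        (NatInt.mk_le_mk (h := hap) (h' := hap.trans hpb) le_rfl hpb) :
        (⟨_, hl⟩ : ↥S) ≤ ⟨_, hab⟩)))
      (G.map (homOfLE (Subtype.mk_le_mk.mpr
        (NatInt.mk_le_mk (h := hpb) (h' := hap.trans hpb) hap le_rfl) :
        (⟨_, hr⟩ : ↥S) ≤ ⟨_, hab⟩)))

/-- The category of persistent `D`-narratives with time `S`. -/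
def Pe (S : Set NatInt) (D : Type*) [Category D] : Type _ :=
  ObjectProperty.FullSubcategory (fun F : (↥S)ᵒᵖ ⥤ D => IsPersistentOn S F)

instance (S : Set NatInt) (D : Type*) [Category D] : Category (Pe S D) :=
  ObjectProperty.FullSubcategory.category _

/-- The category of cumulative `D`-narratives with time `S`. -/
def Cu (S : Set NatInt) (D : Type*) [Category D] : Type _ :=
  ObjectProperty.FullSubcategory (fun G : ↥S ⥤ D => IsCumulativeOn S G)

instance (S : Set NatInt) (D : Type*) [Category D] : Category (Cu S D) :=
  ObjectProperty.FullSubcategory.category _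

/-- Inclusion of time categories. -/
def inclTime {S T : Set NatInt} (hST : S ⊆ T) : ↥S ⥤ ↥T :=
  Monotone.functor (f := fun I => (⟨I.1, hST I.2⟩ : ↥T)) (fun _ _ h => h)

/-- The subposet of intervals of `S` contained in `I`. -/
def below (S : Set NatInt) (I : ↥S) : Type := {J : ↥S // J ≤ I}

instance (S : Set NatInt) (I : ↥S) : PartialOrder (below S I) :=
  Subtype.partialOrder _


/-- Inclusion of the subposet `T/[a,b]` into the time category. -/
def belowIncl (S : Set NatInt) (I : ↥S) : below S I ⥤ ↥S :=
  Monotone.functor (f := fun J => J.1) (fun _ _ h => h)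

attribute [reducible] NatInt.mk

section Aux
open Opposite
variable {D : Type*} [Category D] (S : Set NatInt)

def belowMap {I I' : ↥S} (h : I ≤ I') : below S I ⥤ below S I' :=
  Monotone.functor (f := fun J => ⟨J.1, le_trans J.2 h⟩) (fun _ _ hh => hh)

variable [HasColimitsOfSize.{0,0} D]

abbrev Kdiag (F : (↥S)ᵒᵖ ⥤ D) (I : ↥S) : (below S I)ᵒᵖ ⥤ D where
  obj J := F.obj (op J.unop.1)
  map f := F.map (homOfLE (leOfHom f.unop : _ ≤ _)).op
  map_id J := by rw [← F.map_id]; rfl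
  map_comp f g := by rw [← F.map_comp]; rfl

noncomputable abbrev Kobj (F : (↥S)ᵒᵖ ⥤ D) (I : ↥S) : D := colimit (Kdiag S F I)

noncomputable def Kmap (F : (↥S)ᵒᵖ ⥤ D) {I I' : ↥S} (h : I ≤ I') :
    Kobj S F I ⟶ Kobj S F I' :=
  colimit.pre (Kdiag S F I') (belowMap S h).op

lemma ι_Kmap (F : (↥S)ᵒᵖ ⥤ D) {I I' : ↥S} (h : I ≤ I') (J : (below S I)ᵒᵖ) :
    colimit.ι (Kdiag S F I) J ≫ Kmap S F h =
      colimit.ι (Kdiag S F I') (op ⟨J.unop.1, le_trans J.unop.2 h⟩) :=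
  colimit.ι_pre (Kdiag S F I') (belowMap S h).op J

end Aux

section Aux2
open Opposite
variable {D : Type*} [Category D] (S : Set NatInt) [HasColimitsOfSize.{0,0} D]

lemma ι_w (F : (↥S)ᵒᵖ ⥤ D) (I : ↥S) {J J' : below S I} (h : J' ≤ J) :
    F.map (homOfLE (h : J'.1 ≤ J.1)).op ≫ colimit.ι (Kdiag S F I) (op J') =
      colimit.ι (Kdiag S F I) (op J) :=
  colimit.w (Kdiag S F I) (homOfLE h).op

noncomputable def KFun (F : (↥S)ᵒᵖ ⥤ D) : ↥S ⥤ D where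
  obj I := Kobj S F I
  map {I I'} f := Kmap S F (leOfHom f)
  map_id I := by
    apply colimit.hom_ext; intro J
    exact (ι_Kmap S F le_rfl J).trans (Category.comp_id _).symm
  map_comp {I I' I''} f g := by
    apply colimit.hom_ext; intro J
    rw [ι_Kmap, ← Category.assoc, ι_Kmap, ι_Kmap]

attribute [reducible] KFun

end Aux2

section Aux3
open Opposite
variable {D : Type*} [Category D] (S : Set NatInt) [HasColimitsOfSize.{0,0} D]

noncomputable def KmorApp {F F' : (↥S)ᵒᵖ ⥤ D} (η : F ⟶ F') (I : ↥S) :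
    Kobj S F I ⟶ Kobj S F' I :=
  colimMap (Functor.whiskerLeft (belowIncl S I).op η)

lemma ι_KmorApp {F F' : (↥S)ᵒᵖ ⥤ D} (η : F ⟶ F') (I : ↥S) (J : (below S I)ᵒᵖ) :
    colimit.ι (Kdiag S F I) J ≫ KmorApp S η I =
      η.app (op J.unop.1) ≫ colimit.ι (Kdiag S F' I) J :=
  ι_colimMap (Functor.whiskerLeft (belowIncl S I).op η) J

noncomputable def Kmor {F F' : (↥S)ᵒᵖ ⥤ D} (η : F ⟶ F') : KFun S F ⟶ KFun S F' where
  app I := KmorApp S η I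
  naturality I I' f := by
    apply colimit.hom_ext; intro J
    show colimit.ι (Kdiag S F I) J ≫ Kmap S F (leOfHom f) ≫ KmorApp S η I' =
      colimit.ι (Kdiag S F I) J ≫ KmorApp S η I ≫ Kmap S F' (leOfHom f)
    rw [← Category.assoc, ← Category.assoc, ι_Kmap, ι_KmorApp, ι_KmorApp,
      Category.assoc, ι_Kmap]

end Aux3

section Aux4
open Opposite
variable {D : Type*} [Category D] {S : Set NatInt}

lemma leS {X Y : ↥S} (h1 : Y.1.val.1 ≤ X.1.val.1) (h2 : X.1.val.2 ≤ Y.1.val.2) :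
    X ≤ Y := ⟨h1, h2⟩

lemma leS1 {X Y : ↥S} (h : X ≤ Y) : Y.1.val.1 ≤ X.1.val.1 := h.1
lemma leS2 {X Y : ↥S} (h : X ≤ Y) : X.1.val.2 ≤ Y.1.val.2 := h.2

lemma Fmap_trans [HasColimitsOfSize.{0,0} D] (F : (↥S)ᵒᵖ ⥤ D) {X Y Z : ↥S}
    (h : X ≤ Y) (h' : Y ≤ Z) :
    F.map (homOfLE h').op ≫ F.map (homOfLE h).op = F.map (homOfLE (h.trans h')).op := by
  rw [← F.map_comp]; rfl

/-- The interval `[c, p]` as an element of `S`, when `[c,d] ∈ S`, `[p,p] ∈ S`,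
`c ≤ p`, `d ≤ p`. -/
def midL (hS : SupClosed' S) {p : ℕ} (hm : NatInt.mk p p le_rfl ∈ S) (J : ↥S)
    (hc : J.1.val.1 ≤ p) (hd : J.1.val.2 ≤ p) : ↥S :=
  ⟨NatInt.mk J.1.val.1 p hc, by
    have h := hS J.1 J.2 (NatInt.mk p p le_rfl) hm
    have : NatInt.sup J.1 (NatInt.mk p p le_rfl) = NatInt.mk J.1.val.1 p hc :=
      Subtype.ext (Prod.ext (min_eq_left hc) (max_eq_right hd))
    rwa [this] at h⟩

/-- The interval `[p, d]` as an element of `S`. -/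
def midR (hS : SupClosed' S) {p : ℕ} (hm : NatInt.mk p p le_rfl ∈ S) (J : ↥S)
    (hc : p ≤ J.1.val.1) (hd : p ≤ J.1.val.2) : ↥S :=
  ⟨NatInt.mk p J.1.val.2 hd, by
    have h := hS J.1 J.2 (NatInt.mk p p le_rfl) hm
    have : NatInt.sup J.1 (NatInt.mk p p le_rfl) = NatInt.mk p J.1.val.2 hd :=
      Subtype.ext (Prod.ext (min_eq_right hc) (max_eq_left (le_trans hc J.1.2)))
    rwa [this] at h⟩

end Aux4

section Aux5
open Opposite
variable {D : Type*} [Category D] {S : Set NatInt} [HasColimitsOfSize.{0,0} D]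

abbrev IvS (a b : ℕ) (h : a ≤ b) (hmem : NatInt.mk a b h ∈ S) : ↥S :=
  ⟨NatInt.mk a b h, hmem⟩

variable (hS : SupClosed' S) (F : (↥S)ᵒᵖ ⥤ D) {a p b : ℕ}
  (hap : a ≤ p) (hpb : p ≤ b)
  (hab : NatInt.mk a b (hap.trans hpb) ∈ S) (hl : NatInt.mk a p hap ∈ S)
  (hm : NatInt.mk p p le_rfl ∈ S) (hr : NatInt.mk p b hpb ∈ S)

/-- The legs of the descending cocone. -/
noncomputable def Kleg (W : D)
    (inl : Kobj S F (IvS a p hap hl) ⟶ W) (inr : Kobj S F (IvS p b hpb hr) ⟶ W)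
    (J : (below S (IvS a b (hap.trans hpb) hab))ᵒᵖ) :
    (Kdiag S F (IvS a b (hap.trans hpb) hab)).obj J ⟶ W :=
  if hd : J.unop.1.1.val.2 ≤ p then
    colimit.ι (Kdiag S F (IvS a p hap hl)) (op ⟨J.unop.1, leS (leS1 (Y := IvS a b (hap.trans hpb) hab) J.unop.2) hd⟩) ≫ inl
  else if hc : p ≤ J.unop.1.1.val.1 then
    colimit.ι (Kdiag S F (IvS p b hpb hr)) (op ⟨J.unop.1, leS hc (leS2 (Y := IvS a b (hap.trans hpb) hab) J.unop.2)⟩) ≫ inr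
  else
    F.map (homOfLE (leS (le_of_not_ge hc) (le_of_not_ge hd) :
        IvS p p le_rfl hm ≤ J.unop.1)).op ≫
      colimit.ι (Kdiag S F (IvS a p hap hl))
        (op ⟨IvS p p le_rfl hm, leS hap le_rfl⟩) ≫ inl

end Aux5

section Aux6
open Opposite
variable {D : Type*} [Category D] {S : Set NatInt} [HasColimitsOfSize.{0,0} D]
variable (F : (↥S)ᵒᵖ ⥤ D) {a p b : ℕ}
  (hap : a ≤ p) (hpb : p ≤ b)
  (hab : NatInt.mk a b (hap.trans hpb) ∈ S) (hl : NatInt.mk a p hap ∈ S)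
  (hm : NatInt.mk p p le_rfl ∈ S) (hr : NatInt.mk p b hpb ∈ S)

lemma Kswitch (W : D)
    (inl : Kobj S F (IvS a p hap hl) ⟶ W) (inr : Kobj S F (IvS p b hpb hr) ⟶ W)
    (cond : Kmap S F (leS hap le_rfl : IvS p p le_rfl hm ≤ IvS a p hap hl) ≫ inl
          = Kmap S F (leS le_rfl hpb : IvS p p le_rfl hm ≤ IvS p b hpb hr) ≫ inr)
    (J : ↥S) (hJl : J ≤ IvS a p hap hl) (hJr : J ≤ IvS p b hpb hr) :
    colimit.ι (Kdiag S F (IvS a p hap hl)) (op ⟨J, hJl⟩) ≫ inl =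
      colimit.ι (Kdiag S F (IvS p b hpb hr)) (op ⟨J, hJr⟩) ≫ inr := by
  have hJm : J ≤ IvS p p le_rfl hm :=
    leS (leS1 (Y := IvS p b hpb hr) hJr) (leS2 (Y := IvS a p hap hl) hJl)
  have e1 : colimit.ι (Kdiag S F (IvS a p hap hl)) (op ⟨J, hJl⟩) =
      colimit.ι (Kdiag S F (IvS p p le_rfl hm)) (op ⟨J, hJm⟩) ≫
        Kmap S F (I' := IvS a p hap hl) (leS hap le_rfl) :=
    (ι_Kmap S F (I := IvS p p le_rfl hm) (I' := IvS a p hap hl) (leS hap le_rfl) (op ⟨J, hJm⟩)).symm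
  have e2 : colimit.ι (Kdiag S F (IvS p b hpb hr)) (op ⟨J, hJr⟩) =
      colimit.ι (Kdiag S F (IvS p p le_rfl hm)) (op ⟨J, hJm⟩) ≫
        Kmap S F (I' := IvS p b hpb hr) (leS le_rfl hpb) :=
    (ι_Kmap S F (I := IvS p p le_rfl hm) (I' := IvS p b hpb hr) (leS le_rfl hpb) (op ⟨J, hJm⟩)).symm
  rw [e1, e2, Category.assoc, Category.assoc, cond]

end Aux6


section Aux7
open Opposite
variable {D : Type*} [Category D] {S : Set NatInt} [HasColimitsOfSize.{0,0} D]

lemma step0 (F : (↥S)ᵒᵖ ⥤ D) (I : ↥S) {X Y : ↥S} (hXI : X ≤ I) (hYI : Y ≤ I)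
    (hXY : X ≤ Y) {W : D} (t : colimit (Kdiag S F I) ⟶ W) :
    F.map (homOfLE hXY).op ≫ colimit.ι (Kdiag S F I) (op ⟨X, hXI⟩) ≫ t =
      colimit.ι (Kdiag S F I) (op ⟨Y, hYI⟩) ≫ t := by
  rw [← Category.assoc]
  have h : F.map (homOfLE hXY).op ≫ colimit.ι (Kdiag S F I) (op ⟨X, hXI⟩) =
      colimit.ι (Kdiag S F I) (op ⟨Y, hYI⟩) :=
    colimit.w (Kdiag S F I)
      (homOfLE (show (⟨X, hXI⟩ : below S I) ≤ ⟨Y, hYI⟩ from hXY)).op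
  rw [h]

lemma Fmap_trans' (F : (↥S)ᵒᵖ ⥤ D) {X Y Z : ↥S} (h : X ≤ Y) (h' : Y ≤ Z) {W : D}
    (t : F.obj (op X) ⟶ W) :
    F.map (homOfLE h').op ≫ F.map (homOfLE h).op ≫ t =
      F.map (homOfLE (h.trans h')).op ≫ t := by
  rw [← Category.assoc, Fmap_trans]

lemma step (F : (↥S)ᵒᵖ ⥤ D) (I : ↥S) {X M : ↥S} (hXI : X ≤ I) (hMI : M ≤ I)
    {Y : ↥S} (hXM : X ≤ M) (hMY : M ≤ Y) {W : D} (t : colimit (Kdiag S F I) ⟶ W) :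
    F.map (homOfLE (hXM.trans hMY)).op ≫ colimit.ι (Kdiag S F I) (op ⟨X, hXI⟩) ≫ t =
      F.map (homOfLE hMY).op ≫ colimit.ι (Kdiag S F I) (op ⟨M, hMI⟩) ≫ t := by
  rw [← Fmap_trans F hXM hMY, Category.assoc, step0 F I hXI hMI hXM t]

end Aux7

section Aux8
open Opposite
variable {D : Type*} [Category D] {S : Set NatInt} [HasColimitsOfSize.{0,0} D]
variable (F : (↥S)ᵒᵖ ⥤ D) {a p b : ℕ}
  (hap : a ≤ p) (hpb : p ≤ b)
  (hab : NatInt.mk a b (hap.trans hpb) ∈ S) (hl : NatInt.mk a p hap ∈ S)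
  (hm : NatInt.mk p p le_rfl ∈ S) (hr : NatInt.mk p b hpb ∈ S)

lemma Kleg_nat (hS : SupClosed' S) (W : D)
    (inl : Kobj S F (IvS a p hap hl) ⟶ W) (inr : Kobj S F (IvS p b hpb hr) ⟶ W)
    (cond : Kmap S F (leS hap le_rfl : IvS p p le_rfl hm ≤ IvS a p hap hl) ≫ inl
          = Kmap S F (leS le_rfl hpb : IvS p p le_rfl hm ≤ IvS p b hpb hr) ≫ inr)
    (J J' : (below S (IvS a b (hap.trans hpb) hab))ᵒᵖ) (f : J ⟶ J') :
    (Kdiag S F (IvS a b (hap.trans hpb) hab)).map f ≫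
        Kleg F hap hpb hab hl hm hr W inl inr J' =
      Kleg F hap hpb hab hl hm hr W inl inr J := by
  have hle : J'.unop.1 ≤ J.unop.1 := leOfHom f.unop
  have hmap : (Kdiag S F (IvS a b (hap.trans hpb) hab)).map f =
      F.map (homOfLE hle).op := rfl
  have hKab : J.unop.1 ≤ IvS a b (hap.trans hpb) hab := J.unop.2
  have hK'ab : J'.unop.1 ≤ IvS a b (hap.trans hpb) hab := J'.unop.2
  have ha_c : a ≤ J.unop.1.1.val.1 := leS1 (Y := IvS a b (hap.trans hpb) hab) hKab
  have hd_b : J.unop.1.1.val.2 ≤ b := leS2 (Y := IvS a b (hap.trans hpb) hab) hKab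
  have ha_c' : a ≤ J'.unop.1.1.val.1 := leS1 (Y := IvS a b (hap.trans hpb) hab) hK'ab
  have hd'_b : J'.unop.1.1.val.2 ≤ b := leS2 (Y := IvS a b (hap.trans hpb) hab) hK'ab
  have hcc' : J.unop.1.1.val.1 ≤ J'.unop.1.1.val.1 := leS1 (Y := J.unop.1) hle
  have hd'd : J'.unop.1.1.val.2 ≤ J.unop.1.1.val.2 := leS2 (Y := J.unop.1) hle
  have hppap : IvS p p le_rfl hm ≤ IvS a p hap hl := leS hap le_rfl
  have hpppb : IvS p p le_rfl hm ≤ IvS p b hpb hr := leS le_rfl hpb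
  by_cases hd : J.unop.1.1.val.2 ≤ p
  · -- both inside [a,p]
    have hd' : J'.unop.1.1.val.2 ≤ p := le_trans hd'd hd
    have hJ : J.unop.1 ≤ IvS a p hap hl := leS ha_c hd
    have hJ' : J'.unop.1 ≤ IvS a p hap hl := leS ha_c' hd'
    simp only [Kleg]
    rw [dif_pos hd', dif_pos hd, hmap]
    exact step0 F (IvS a p hap hl) hJ' hJ hle inl
  · by_cases hc : p ≤ J.unop.1.1.val.1
    · -- J inside [p,b]
      have hc' : p ≤ J'.unop.1.1.val.1 := le_trans hc hcc'
      have hJ : J.unop.1 ≤ IvS p b hpb hr := leS hc hd_b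
      by_cases hd' : J'.unop.1.1.val.2 ≤ p
      · -- J' = [p,p] effectively; left branch for J'
        have hJ'l : J'.unop.1 ≤ IvS a p hap hl := leS ha_c' hd'
        have hJ'r : J'.unop.1 ≤ IvS p b hpb hr := leS hc' hd'_b
        simp only [Kleg]
        rw [dif_pos hd', dif_neg hd, dif_pos hc, hmap]
        exact (congrArg (fun t => F.map (homOfLE hle).op ≫ t)
          (Kswitch F hap hpb hl hm hr W inl inr cond J'.unop.1 hJ'l hJ'r)).trans
          (step0 F (IvS p b hpb hr) hJ'r hJ hle inr)
      · have hJ' : J'.unop.1 ≤ IvS p b hpb hr := leS hc' hd'_b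
        simp only [Kleg]
        rw [dif_neg hd', dif_pos hc', dif_neg hd, dif_pos hc, hmap]
        exact step0 F (IvS p b hpb hr) hJ' hJ hle inr
    · -- J straddles p
      have hpd : p ≤ J.unop.1.1.val.2 := le_of_not_ge hd
      have hcp : J.unop.1.1.val.1 ≤ p := le_of_not_ge hc
      have hppK : IvS p p le_rfl hm ≤ J.unop.1 := leS hcp hpd
      by_cases hd' : J'.unop.1.1.val.2 ≤ p
      · -- J' inside [a,p]; go through M = [c', p]
        have hc'p : J'.unop.1.1.val.1 ≤ p := le_trans J'.unop.1.1.2 hd'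
        have hJ'M : J'.unop.1 ≤ midL hS hm J'.unop.1 hc'p hd' := leS le_rfl hd'
        have hppM : IvS p p le_rfl hm ≤ midL hS hm J'.unop.1 hc'p hd' := leS hc'p le_rfl
        have hMK : midL hS hm J'.unop.1 hc'p hd' ≤ J.unop.1 := leS hcc' hpd
        have hMap : midL hS hm J'.unop.1 hc'p hd' ≤ IvS a p hap hl :=
          leS ha_c' le_rfl
        have hJ' : J'.unop.1 ≤ IvS a p hap hl := leS ha_c' hd'
        simp only [Kleg]
        rw [dif_pos hd', dif_neg hd, dif_neg hc, hmap]
        exact (step F (IvS a p hap hl) hJ' hMap hJ'M hMK inl).trans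
          (step F (IvS a p hap hl) hppap hMap hppM hMK inl).symm
      · by_cases hc' : p ≤ J'.unop.1.1.val.1
        · -- J' inside [p,b]; through M = [p, d'], switching sides at [p,p]
          have hpd' : p ≤ J'.unop.1.1.val.2 := le_of_not_ge hd'
          have hJ'M : J'.unop.1 ≤ midR hS hm J'.unop.1 hc' hpd' := leS hc' le_rfl
          have hppM : IvS p p le_rfl hm ≤ midR hS hm J'.unop.1 hc' hpd' :=
            leS le_rfl hpd'
          have hMK : midR hS hm J'.unop.1 hc' hpd' ≤ J.unop.1 := leS hcp hd'd
          have hMpb : midR hS hm J'.unop.1 hc' hpd' ≤ IvS p b hpb hr :=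
            leS le_rfl (le_trans hd'd hd_b)
          have hJ' : J'.unop.1 ≤ IvS p b hpb hr := leS hc' hd'_b
          simp only [Kleg]
          rw [dif_neg hd', dif_pos hc', dif_neg hd, dif_neg hc, hmap]
          exact ((step F (IvS p b hpb hr) hJ' hMpb hJ'M hMK inr).trans
            (step F (IvS p b hpb hr) hpppb hMpb hppM hMK inr).symm).trans
            (congrArg (fun t => F.map (homOfLE (hppM.trans hMK)).op ≫ t)
              (Kswitch F hap hpb hl hm hr W inl inr cond
                (IvS p p le_rfl hm) hppap hpppb).symm)
        · -- J' also straddles p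
          have hppK' : IvS p p le_rfl hm ≤ J'.unop.1 :=
            leS (le_of_not_ge hc') (le_of_not_ge hd')
          simp only [Kleg]
          rw [dif_neg hd', dif_neg hc', dif_neg hd, dif_neg hc, hmap]
          exact Fmap_trans' F hppK' hle
            (colimit.ι (Kdiag S F (IvS a p hap hl))
              (op ⟨IvS p p le_rfl hm, hppap⟩) ≫ inl)

end Aux8

section Aux9
open Opposite
variable {D : Type*} [Category D] {S : Set NatInt} [HasColimitsOfSize.{0,0} D]
variable (F : (↥S)ᵒᵖ ⥤ D) {a p b : ℕ}
  (hap : a ≤ p) (hpb : p ≤ b)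
  (hab : NatInt.mk a b (hap.trans hpb) ∈ S) (hl : NatInt.mk a p hap ∈ S)
  (hm : NatInt.mk p p le_rfl ∈ S) (hr : NatInt.mk p b hpb ∈ S)

lemma K_pushout (hS : SupClosed' S) :
    IsPushout
      (Kmap S F (leS hap le_rfl : IvS p p le_rfl hm ≤ IvS a p hap hl))
      (Kmap S F (leS le_rfl hpb : IvS p p le_rfl hm ≤ IvS p b hpb hr))
      (Kmap S F (leS le_rfl hpb : IvS a p hap hl ≤ IvS a b (hap.trans hpb) hab))
      (Kmap S F (leS hap le_rfl : IvS p b hpb hr ≤ IvS a b (hap.trans hpb) hab)) := by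
  have w : CommSq
      (Kmap S F (leS hap le_rfl : IvS p p le_rfl hm ≤ IvS a p hap hl))
      (Kmap S F (leS le_rfl hpb : IvS p p le_rfl hm ≤ IvS p b hpb hr))
      (Kmap S F (leS le_rfl hpb : IvS a p hap hl ≤ IvS a b (hap.trans hpb) hab))
      (Kmap S F (leS hap le_rfl : IvS p b hpb hr ≤ IvS a b (hap.trans hpb) hab)) := by
    constructor
    apply colimit.hom_ext; intro J
    rw [← Category.assoc, ι_Kmap, ι_Kmap, ← Category.assoc, ι_Kmap, ι_Kmap]
  refine IsPushout.of_isColimit' w (PushoutCocone.IsColimit.mk w.w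
    (fun s => colimit.desc _
      ⟨s.pt, ⟨Kleg F hap hpb hab hl hm hr s.pt s.inl s.inr,
        fun {J J'} f => by
          simpa using Kleg_nat F hap hpb hab hl hm hr hS s.pt s.inl s.inr
            s.condition J J' f⟩⟩)
    (fun s => ?_) (fun s => ?_) (fun s m hml hmr => ?_))
  · -- fac_left
    apply colimit.hom_ext; intro J
    have hd : J.unop.1.1.val.2 ≤ p := leS2 (Y := IvS a p hap hl) J.unop.2
    rw [← Category.assoc, ι_Kmap, colimit.ι_desc]
    show Kleg F hap hpb hab hl hm hr s.pt s.inl s.inr _ = _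
    simp only [Kleg, unop_op]
    rw [dif_pos hd]
    rfl
  · -- fac_right
    apply colimit.hom_ext; intro J
    have hc : p ≤ J.unop.1.1.val.1 := leS1 (Y := IvS p b hpb hr) J.unop.2
    rw [← Category.assoc, ι_Kmap, colimit.ι_desc]
    show Kleg F hap hpb hab hl hm hr s.pt s.inl s.inr _ = _
    by_cases hd : J.unop.1.1.val.2 ≤ p
    · have hJl : J.unop.1 ≤ IvS a p hap hl :=
        leS (le_trans hap hc) hd
      have hJr : J.unop.1 ≤ IvS p b hpb hr := J.unop.2
      simp only [Kleg, unop_op]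
      rw [dif_pos hd]
      exact Kswitch F hap hpb hl hm hr s.pt s.inl s.inr s.condition J.unop.1 hJl hJr
    · simp only [Kleg, unop_op]
      rw [dif_neg hd, dif_pos hc]
      rfl
  · -- uniqueness
    apply colimit.hom_ext; intro J
    rw [colimit.ι_desc]
    show _ = Kleg F hap hpb hab hl hm hr s.pt s.inl s.inr _
    by_cases hd : J.unop.1.1.val.2 ≤ p
    · have hJl : J.unop.1 ≤ IvS a p hap hl :=
        leS (leS1 (Y := IvS a b (hap.trans hpb) hab) J.unop.2) hd
      have e : colimit.ι (Kdiag S F (IvS a b (hap.trans hpb) hab)) J =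
          colimit.ι (Kdiag S F (IvS a p hap hl)) (op ⟨J.unop.1, hJl⟩) ≫
            Kmap S F (leS le_rfl hpb : IvS a p hap hl ≤ IvS a b (hap.trans hpb) hab) :=
        (ι_Kmap S F (I := IvS a p hap hl) (I' := IvS a b (hap.trans hpb) hab)
          (leS le_rfl hpb) (op ⟨J.unop.1, hJl⟩)).symm
      rw [e, Category.assoc, hml]
      simp only [Kleg, unop_op]
      rw [dif_pos hd]
    · by_cases hc : p ≤ J.unop.1.1.val.1
      · have hJr : J.unop.1 ≤ IvS p b hpb hr :=
          leS hc (leS2 (Y := IvS a b (hap.trans hpb) hab) J.unop.2)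
        have e : colimit.ι (Kdiag S F (IvS a b (hap.trans hpb) hab)) J =
            colimit.ι (Kdiag S F (IvS p b hpb hr)) (op ⟨J.unop.1, hJr⟩) ≫
              Kmap S F (leS hap le_rfl : IvS p b hpb hr ≤ IvS a b (hap.trans hpb) hab) :=
          (ι_Kmap S F (I := IvS p b hpb hr) (I' := IvS a b (hap.trans hpb) hab)
            (leS hap le_rfl) (op ⟨J.unop.1, hJr⟩)).symm
        rw [e, Category.assoc, hmr]
        simp only [Kleg, unop_op]
        rw [dif_neg hd, dif_pos hc]
      · have hppK : IvS p p le_rfl hm ≤ J.unop.1 :=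
          leS (le_of_not_ge hc) (le_of_not_ge hd)
        have hppab : IvS p p le_rfl hm ≤ IvS a b (hap.trans hpb) hab :=
          leS hap (le_trans le_rfl hpb)
        have hppap : IvS p p le_rfl hm ≤ IvS a p hap hl := leS hap le_rfl
        have e : colimit.ι (Kdiag S F (IvS a b (hap.trans hpb) hab)) J =
            F.map (homOfLE hppK).op ≫
              colimit.ι (Kdiag S F (IvS a b (hap.trans hpb) hab))
                (op ⟨IvS p p le_rfl hm, hppab⟩) :=
          (colimit.w (Kdiag S F (IvS a b (hap.trans hpb) hab))
            (homOfLE (show (⟨IvS p p le_rfl hm, hppab⟩ :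
              below S (IvS a b (hap.trans hpb) hab)) ≤ ⟨J.unop.1, J.unop.2⟩
              from hppK)).op).symm
        have e2 : colimit.ι (Kdiag S F (IvS a b (hap.trans hpb) hab))
              (op ⟨IvS p p le_rfl hm, hppab⟩) =
            colimit.ι (Kdiag S F (IvS a p hap hl)) (op ⟨IvS p p le_rfl hm, hppap⟩) ≫
              Kmap S F (leS le_rfl hpb : IvS a p hap hl ≤ IvS a b (hap.trans hpb) hab) :=
          (ι_Kmap S F (I := IvS a p hap hl) (I' := IvS a b (hap.trans hpb) hab)
            (leS le_rfl hpb) (op ⟨IvS p p le_rfl hm, hppap⟩)).symm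
        rw [e, e2, Category.assoc, Category.assoc, hml]
        simp only [Kleg, unop_op]
        rw [dif_neg hd, dif_neg hc]

end Aux9

section PAux
open Opposite
variable {D : Type*} [Category D] (S : Set NatInt) [HasLimitsOfSize.{0,0} D]

abbrev Pdiag (G : ↥S ⥤ D) (I : ↥S) : below S I ⥤ D where
  obj J := G.obj J.1
  map f := G.map (homOfLE (leOfHom f : _ ≤ _))
  map_id J := by rw [← G.map_id]; rfl
  map_comp f g := by rw [← G.map_comp]; rfl

noncomputable abbrev Pobj (G : ↥S ⥤ D) (I : ↥S) : D := limit (Pdiag S G I)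

noncomputable def Pmap (G : ↥S ⥤ D) {I I' : ↥S} (h : I ≤ I') :
    Pobj S G I' ⟶ Pobj S G I :=
  limit.pre (Pdiag S G I') (belowMap S h)

lemma Pmap_π (G : ↥S ⥤ D) {I I' : ↥S} (h : I ≤ I') (J : below S I) :
    Pmap S G h ≫ limit.π (Pdiag S G I) J =
      limit.π (Pdiag S G I') ⟨J.1, le_trans J.2 h⟩ :=
  limit.pre_π (Pdiag S G I') (belowMap S h) J

noncomputable def PFn (G : ↥S ⥤ D) : (↥S)ᵒᵖ ⥤ D where
  obj I := Pobj S G I.unop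
  map {I I'} f := Pmap S G (leOfHom f.unop)
  map_id I := by
    apply limit.hom_ext; intro J
    simp only [Category.id_comp]
    exact Pmap_π S G le_rfl J
  map_comp {I I' I''} f g := by
    apply limit.hom_ext; intro J
    have h1 : Pmap S G (leOfHom g.unop) ≫ limit.π (Pdiag S G I''.unop) J =
        limit.π (Pdiag S G I'.unop) ⟨J.1, le_trans J.2 (leOfHom g.unop)⟩ := Pmap_π S G _ J
    have h2 : Pmap S G (leOfHom f.unop) ≫
          limit.π (Pdiag S G I'.unop) ⟨J.1, le_trans J.2 (leOfHom g.unop)⟩ =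
        limit.π (Pdiag S G I.unop) ⟨J.1, le_trans J.2 (leOfHom (f ≫ g).unop)⟩ :=
      Pmap_π S G _ _
    have h3 : Pmap S G (leOfHom (f ≫ g).unop) ≫ limit.π (Pdiag S G I''.unop) J =
        limit.π (Pdiag S G I.unop) ⟨J.1, le_trans J.2 (leOfHom (f ≫ g).unop)⟩ :=
      Pmap_π S G _ J
    exact h3.trans (h2.symm.trans ((congrArg (fun t => Pmap S G (leOfHom f.unop) ≫ t)
      h1.symm).trans (Category.assoc _ _ _).symm))

attribute [reducible] PFn

noncomputable def PmorApp {G G' : ↥S ⥤ D} (η : G ⟶ G') (I : ↥S) :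
    Pobj S G I ⟶ Pobj S G' I :=
  limMap (Functor.whiskerLeft (belowIncl S I) η)

lemma PmorApp_π {G G' : ↥S ⥤ D} (η : G ⟶ G') (I : ↥S) (J : below S I) :
    PmorApp S η I ≫ limit.π (Pdiag S G' I) J =
      limit.π (Pdiag S G I) J ≫ η.app J.1 :=
  limMap_π (Functor.whiskerLeft (belowIncl S I) η) J

noncomputable def Pmor {G G' : ↥S ⥤ D} (η : G ⟶ G') : PFn S G ⟶ PFn S G' where
  app I := PmorApp S η I.unop
  naturality I I' f := by
    apply limit.hom_ext; intro J
    show (Pmap S G (leOfHom f.unop) ≫ PmorApp S η I'.unop) ≫ _ =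
      (PmorApp S η I.unop ≫ Pmap S G' (leOfHom f.unop)) ≫ _
    erw [Category.assoc, Category.assoc, PmorApp_π, Pmap_π, ← Category.assoc, Pmap_π,
      PmorApp_π]

end PAux

section PAux2
open Opposite
variable {D : Type*} [Category D] {S : Set NatInt} [HasLimitsOfSize.{0,0} D]

lemma Gmap_trans (G : ↥S ⥤ D) {X Y Z : ↥S} (h : X ≤ Y) (h' : Y ≤ Z) :
    G.map (homOfLE h) ≫ G.map (homOfLE h') = G.map (homOfLE (h.trans h')) := by
  rw [← G.map_comp]; rfl

lemma step0P (G : ↥S ⥤ D) (I : ↥S) {X Y : ↥S} (hXI : X ≤ I) (hYI : Y ≤ I)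
    (hXY : X ≤ Y) {W : D} (t : W ⟶ limit (Pdiag S G I)) :
    (t ≫ limit.π (Pdiag S G I) ⟨X, hXI⟩) ≫ G.map (homOfLE hXY) =
      t ≫ limit.π (Pdiag S G I) ⟨Y, hYI⟩ := by
  rw [Category.assoc]
  have h : limit.π (Pdiag S G I) ⟨X, hXI⟩ ≫ G.map (homOfLE hXY) =
      limit.π (Pdiag S G I) ⟨Y, hYI⟩ :=
    limit.w (Pdiag S G I)
      (homOfLE (show (⟨X, hXI⟩ : below S I) ≤ ⟨Y, hYI⟩ from hXY))
  rw [h]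

lemma stepP (G : ↥S ⥤ D) (I : ↥S) {X M : ↥S} (hXI : X ≤ I) (hMI : M ≤ I)
    {Y : ↥S} (hXM : X ≤ M) (hMY : M ≤ Y) {W : D} (t : W ⟶ limit (Pdiag S G I)) :
    (t ≫ limit.π (Pdiag S G I) ⟨X, hXI⟩) ≫ G.map (homOfLE (hXM.trans hMY)) =
      (t ≫ limit.π (Pdiag S G I) ⟨M, hMI⟩) ≫ G.map (homOfLE hMY) := by
  rw [← Gmap_trans G hXM hMY, ← Category.assoc, step0P G I hXI hMI hXM t]

end PAux2

section PAux3
open Opposite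
variable {D : Type*} [Category D] {S : Set NatInt} [HasLimitsOfSize.{0,0} D]
variable (G : ↥S ⥤ D) {a p b : ℕ}
  (hap : a ≤ p) (hpb : p ≤ b)
  (hab : NatInt.mk a b (hap.trans hpb) ∈ S) (hl : NatInt.mk a p hap ∈ S)
  (hm : NatInt.mk p p le_rfl ∈ S) (hr : NatInt.mk p b hpb ∈ S)

lemma Pswitch (W : D)
    (fst : W ⟶ Pobj S G (IvS a p hap hl)) (snd : W ⟶ Pobj S G (IvS p b hpb hr))
    (cond : fst ≫ Pmap S G (leS hap le_rfl : IvS p p le_rfl hm ≤ IvS a p hap hl)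
          = snd ≫ Pmap S G (leS le_rfl hpb : IvS p p le_rfl hm ≤ IvS p b hpb hr))
    (J : ↥S) (hJl : J ≤ IvS a p hap hl) (hJr : J ≤ IvS p b hpb hr) :
    fst ≫ limit.π (Pdiag S G (IvS a p hap hl)) ⟨J, hJl⟩ =
      snd ≫ limit.π (Pdiag S G (IvS p b hpb hr)) ⟨J, hJr⟩ := by
  have hJm : J ≤ IvS p p le_rfl hm :=
    leS (leS1 (Y := IvS p b hpb hr) hJr) (leS2 (Y := IvS a p hap hl) hJl)
  have e1 : limit.π (Pdiag S G (IvS a p hap hl)) ⟨J, hJl⟩ =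
      Pmap S G (I := IvS p p le_rfl hm) (I' := IvS a p hap hl) (leS hap le_rfl) ≫
        limit.π (Pdiag S G (IvS p p le_rfl hm)) ⟨J, hJm⟩ :=
    (Pmap_π S G (I := IvS p p le_rfl hm) (I' := IvS a p hap hl)
      (leS hap le_rfl) ⟨J, hJm⟩).symm
  have e2 : limit.π (Pdiag S G (IvS p b hpb hr)) ⟨J, hJr⟩ =
      Pmap S G (I := IvS p p le_rfl hm) (I' := IvS p b hpb hr) (leS le_rfl hpb) ≫
        limit.π (Pdiag S G (IvS p p le_rfl hm)) ⟨J, hJm⟩ :=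
    (Pmap_π S G (I := IvS p p le_rfl hm) (I' := IvS p b hpb hr)
      (leS le_rfl hpb) ⟨J, hJm⟩).symm
  rw [e1, e2, ← Category.assoc, ← Category.assoc, cond]

/-- The legs of the lifting cone. -/
noncomputable def Pleg (W : D)
    (fst : W ⟶ Pobj S G (IvS a p hap hl)) (snd : W ⟶ Pobj S G (IvS p b hpb hr))
    (J : below S (IvS a b (hap.trans hpb) hab)) :
    W ⟶ (Pdiag S G (IvS a b (hap.trans hpb) hab)).obj J :=
  if hd : J.1.1.val.2 ≤ p then
    fst ≫ limit.π (Pdiag S G (IvS a p hap hl))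
      ⟨J.1, leS (leS1 (Y := IvS a b (hap.trans hpb) hab) J.2) hd⟩
  else if hc : p ≤ J.1.1.val.1 then
    snd ≫ limit.π (Pdiag S G (IvS p b hpb hr))
      ⟨J.1, leS hc (leS2 (Y := IvS a b (hap.trans hpb) hab) J.2)⟩
  else
    (fst ≫ limit.π (Pdiag S G (IvS a p hap hl))
        ⟨IvS p p le_rfl hm, leS hap le_rfl⟩) ≫
      G.map (homOfLE (leS (le_of_not_ge hc) (le_of_not_ge hd) :
        IvS p p le_rfl hm ≤ J.1))

lemma Pleg_nat (hS : SupClosed' S) (W : D)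
    (fst : W ⟶ Pobj S G (IvS a p hap hl)) (snd : W ⟶ Pobj S G (IvS p b hpb hr))
    (cond : fst ≫ Pmap S G (leS hap le_rfl : IvS p p le_rfl hm ≤ IvS a p hap hl)
          = snd ≫ Pmap S G (leS le_rfl hpb : IvS p p le_rfl hm ≤ IvS p b hpb hr))
    (J J' : below S (IvS a b (hap.trans hpb) hab)) (f : J ⟶ J') :
    Pleg G hap hpb hab hl hm hr W fst snd J ≫
        (Pdiag S G (IvS a b (hap.trans hpb) hab)).map f =
      Pleg G hap hpb hab hl hm hr W fst snd J' := by
  have hle : J.1 ≤ J'.1 := leOfHom f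
  have hmap : (Pdiag S G (IvS a b (hap.trans hpb) hab)).map f =
      G.map (homOfLE hle) := rfl
  have hKab : J.1 ≤ IvS a b (hap.trans hpb) hab := J.2
  have hK'ab : J'.1 ≤ IvS a b (hap.trans hpb) hab := J'.2
  have ha_c : a ≤ J.1.1.val.1 := leS1 (Y := IvS a b (hap.trans hpb) hab) hKab
  have hd_b : J.1.1.val.2 ≤ b := leS2 (Y := IvS a b (hap.trans hpb) hab) hKab
  have ha_c' : a ≤ J'.1.1.val.1 := leS1 (Y := IvS a b (hap.trans hpb) hab) hK'ab
  have hd'_b : J'.1.1.val.2 ≤ b := leS2 (Y := IvS a b (hap.trans hpb) hab) hK'ab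
  have hcc' : J'.1.1.val.1 ≤ J.1.1.val.1 := leS1 (Y := J'.1) hle
  have hd'd : J.1.1.val.2 ≤ J'.1.1.val.2 := leS2 (Y := J'.1) hle
  have hppap : IvS p p le_rfl hm ≤ IvS a p hap hl := leS hap le_rfl
  have hpppb : IvS p p le_rfl hm ≤ IvS p b hpb hr := leS le_rfl hpb
  -- here J ≤ J' (J is the smaller interval)
  by_cases hd' : J'.1.1.val.2 ≤ p
  · -- both inside [a,p]
    have hd : J.1.1.val.2 ≤ p := le_trans hd'd hd'
    have hJ : J.1 ≤ IvS a p hap hl := leS ha_c hd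
    have hJ' : J'.1 ≤ IvS a p hap hl := leS ha_c' hd'
    simp only [Pleg]
    rw [dif_pos hd, dif_pos hd', hmap]
    exact step0P G (IvS a p hap hl) hJ hJ' hle fst
  · by_cases hc' : p ≤ J'.1.1.val.1
    · -- J' inside [p,b]
      have hc : p ≤ J.1.1.val.1 := le_trans hc' hcc'
      have hJ' : J'.1 ≤ IvS p b hpb hr := leS hc' hd'_b
      by_cases hd : J.1.1.val.2 ≤ p
      · -- J = [p,p] effectively; left branch for J
        have hJl : J.1 ≤ IvS a p hap hl := leS ha_c hd
        have hJr : J.1 ≤ IvS p b hpb hr := leS hc hd_b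
        simp only [Pleg]
        rw [dif_pos hd, dif_neg hd', dif_pos hc', hmap]
        exact (congrArg (fun t => t ≫ G.map (homOfLE hle))
          (Pswitch G hap hpb hl hm hr W fst snd cond J.1 hJl hJr)).trans
          (step0P G (IvS p b hpb hr) hJr hJ' hle snd)
      · have hJ : J.1 ≤ IvS p b hpb hr := leS hc hd_b
        simp only [Pleg]
        rw [dif_neg hd, dif_pos hc, dif_neg hd', dif_pos hc', hmap]
        exact step0P G (IvS p b hpb hr) hJ hJ' hle snd
    · -- J' straddles p
      have hpd' : p ≤ J'.1.1.val.2 := le_of_not_ge hd'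
      have hc'p : J'.1.1.val.1 ≤ p := le_of_not_ge hc'
      have hppK' : IvS p p le_rfl hm ≤ J'.1 := leS hc'p hpd'
      by_cases hd : J.1.1.val.2 ≤ p
      · -- J inside [a,p]; go through M = [c, p]
        have hcp : J.1.1.val.1 ≤ p := le_trans J.1.1.2 hd
        have hJM : J.1 ≤ midL hS hm J.1 hcp hd := leS le_rfl hd
        have hppM : IvS p p le_rfl hm ≤ midL hS hm J.1 hcp hd := leS hcp le_rfl
        have hMK' : midL hS hm J.1 hcp hd ≤ J'.1 := leS hcc' hpd'
        have hMap : midL hS hm J.1 hcp hd ≤ IvS a p hap hl := leS ha_c le_rfl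
        have hJ : J.1 ≤ IvS a p hap hl := leS ha_c hd
        simp only [Pleg]
        rw [dif_pos hd, dif_neg hd', dif_neg hc', hmap]
        exact (stepP G (IvS a p hap hl) hJ hMap hJM hMK' fst).trans
          (stepP G (IvS a p hap hl) hppap hMap hppM hMK' fst).symm
      · by_cases hc : p ≤ J.1.1.val.1
        · -- J inside [p,b]; through M = [p, d], switching sides at [p,p]
          have hpd : p ≤ J.1.1.val.2 := le_of_not_ge hd
          have hJM : J.1 ≤ midR hS hm J.1 hc hpd := leS hc le_rfl
          have hppM : IvS p p le_rfl hm ≤ midR hS hm J.1 hc hpd := leS le_rfl hpd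
          have hMK' : midR hS hm J.1 hc hpd ≤ J'.1 := leS hc'p hd'd
          have hMpb : midR hS hm J.1 hc hpd ≤ IvS p b hpb hr :=
            leS le_rfl (le_trans hd'd hd'_b)
          have hJ : J.1 ≤ IvS p b hpb hr := leS hc hd_b
          simp only [Pleg]
          rw [dif_neg hd, dif_pos hc, dif_neg hd', dif_neg hc', hmap]
          exact ((stepP G (IvS p b hpb hr) hJ hMpb hJM hMK' snd).trans
            (stepP G (IvS p b hpb hr) hpppb hMpb hppM hMK' snd).symm).trans
            (congrArg (fun t => t ≫ G.map (homOfLE (hppM.trans hMK')))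
              (Pswitch G hap hpb hl hm hr W fst snd cond
                (IvS p p le_rfl hm) hppap hpppb).symm)
        · -- J also straddles p
          have hppK : IvS p p le_rfl hm ≤ J.1 :=
            leS (le_of_not_ge hc) (le_of_not_ge hd)
          simp only [Pleg]
          rw [dif_neg hd, dif_neg hc, dif_neg hd', dif_neg hc', hmap, Category.assoc,
            Gmap_trans]

end PAux3

section PAux4
open Opposite
variable {D : Type*} [Category D] {S : Set NatInt} [HasLimitsOfSize.{0,0} D]
variable (G : ↥S ⥤ D) {a p b : ℕ}
  (hap : a ≤ p) (hpb : p ≤ b)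
  (hab : NatInt.mk a b (hap.trans hpb) ∈ S) (hl : NatInt.mk a p hap ∈ S)
  (hm : NatInt.mk p p le_rfl ∈ S) (hr : NatInt.mk p b hpb ∈ S)

lemma P_pullback (hS : SupClosed' S) :
    IsPullback
      (Pmap S G (leS le_rfl hpb : IvS a p hap hl ≤ IvS a b (hap.trans hpb) hab))
      (Pmap S G (leS hap le_rfl : IvS p b hpb hr ≤ IvS a b (hap.trans hpb) hab))
      (Pmap S G (leS hap le_rfl : IvS p p le_rfl hm ≤ IvS a p hap hl))
      (Pmap S G (leS le_rfl hpb : IvS p p le_rfl hm ≤ IvS p b hpb hr)) := by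
  have w : CommSq
      (Pmap S G (leS le_rfl hpb : IvS a p hap hl ≤ IvS a b (hap.trans hpb) hab))
      (Pmap S G (leS hap le_rfl : IvS p b hpb hr ≤ IvS a b (hap.trans hpb) hab))
      (Pmap S G (leS hap le_rfl : IvS p p le_rfl hm ≤ IvS a p hap hl))
      (Pmap S G (leS le_rfl hpb : IvS p p le_rfl hm ≤ IvS p b hpb hr)) := by
    constructor
    apply limit.hom_ext; intro J
    erw [Category.assoc, Pmap_π, Pmap_π, Category.assoc, Pmap_π, Pmap_π]
  refine IsPullback.of_isLimit' w (PullbackCone.IsLimit.mk w.w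
    (fun s => limit.lift _
      ⟨s.pt, ⟨Pleg G hap hpb hab hl hm hr s.pt s.fst s.snd,
        fun {J J'} f => by
          simpa using (Pleg_nat G hap hpb hab hl hm hr hS s.pt s.fst s.snd
            s.condition J J' f).symm⟩⟩)
    (fun s => ?_) (fun s => ?_) (fun s m hm1 hm2 => ?_))
  · -- fac_left
    apply limit.hom_ext; intro J
    have hd : J.1.1.val.2 ≤ p := leS2 (Y := IvS a p hap hl) J.2
    erw [Category.assoc, Pmap_π, limit.lift_π]
    show Pleg G hap hpb hab hl hm hr s.pt s.fst s.snd _ = _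
    simp only [Pleg]
    rw [dif_pos hd]
    rfl
  · -- fac_right
    apply limit.hom_ext; intro J
    have hc : p ≤ J.1.1.val.1 := leS1 (Y := IvS p b hpb hr) J.2
    erw [Category.assoc, Pmap_π, limit.lift_π]
    show Pleg G hap hpb hab hl hm hr s.pt s.fst s.snd _ = _
    by_cases hd : J.1.1.val.2 ≤ p
    · have hJl : J.1 ≤ IvS a p hap hl := leS (le_trans hap hc) hd
      have hJr : J.1 ≤ IvS p b hpb hr := J.2
      simp only [Pleg]
      rw [dif_pos hd]
      exact Pswitch G hap hpb hl hm hr s.pt s.fst s.snd s.condition J.1 hJl hJr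
    · simp only [Pleg]
      rw [dif_neg hd, dif_pos hc]
      rfl
  · -- uniqueness
    apply limit.hom_ext; intro J
    rw [limit.lift_π]
    show _ = Pleg G hap hpb hab hl hm hr s.pt s.fst s.snd _
    by_cases hd : J.1.1.val.2 ≤ p
    · have hJl : J.1 ≤ IvS a p hap hl :=
        leS (leS1 (Y := IvS a b (hap.trans hpb) hab) J.2) hd
      have e : limit.π (Pdiag S G (IvS a b (hap.trans hpb) hab)) J =
          Pmap S G (leS le_rfl hpb : IvS a p hap hl ≤ IvS a b (hap.trans hpb) hab) ≫
            limit.π (Pdiag S G (IvS a p hap hl)) ⟨J.1, hJl⟩ :=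
        (Pmap_π S G (I := IvS a p hap hl) (I' := IvS a b (hap.trans hpb) hab)
          (leS le_rfl hpb) ⟨J.1, hJl⟩).symm
      rw [e, ← Category.assoc, hm1]
      simp only [Pleg]
      rw [dif_pos hd]
    · by_cases hc : p ≤ J.1.1.val.1
      · have hJr : J.1 ≤ IvS p b hpb hr :=
          leS hc (leS2 (Y := IvS a b (hap.trans hpb) hab) J.2)
        have e : limit.π (Pdiag S G (IvS a b (hap.trans hpb) hab)) J =
            Pmap S G (leS hap le_rfl : IvS p b hpb hr ≤ IvS a b (hap.trans hpb) hab) ≫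
              limit.π (Pdiag S G (IvS p b hpb hr)) ⟨J.1, hJr⟩ :=
          (Pmap_π S G (I := IvS p b hpb hr) (I' := IvS a b (hap.trans hpb) hab)
            (leS hap le_rfl) ⟨J.1, hJr⟩).symm
        rw [e, ← Category.assoc, hm2]
        simp only [Pleg]
        rw [dif_neg hd, dif_pos hc]
      · have hppK : IvS p p le_rfl hm ≤ J.1 :=
          leS (le_of_not_ge hc) (le_of_not_ge hd)
        have hppab : IvS p p le_rfl hm ≤ IvS a b (hap.trans hpb) hab :=
          leS hap (le_trans le_rfl hpb)
        have hppap : IvS p p le_rfl hm ≤ IvS a p hap hl := leS hap le_rfl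
        have e : limit.π (Pdiag S G (IvS a b (hap.trans hpb) hab)) J =
            limit.π (Pdiag S G (IvS a b (hap.trans hpb) hab))
                ⟨IvS p p le_rfl hm, hppab⟩ ≫ G.map (homOfLE hppK) :=
          (limit.w (Pdiag S G (IvS a b (hap.trans hpb) hab))
            (homOfLE (show (⟨IvS p p le_rfl hm, hppab⟩ :
              below S (IvS a b (hap.trans hpb) hab)) ≤ ⟨J.1, J.2⟩
              from hppK))).symm
        have e2 : limit.π (Pdiag S G (IvS a b (hap.trans hpb) hab))
              ⟨IvS p p le_rfl hm, hppab⟩ =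
            Pmap S G (leS le_rfl hpb : IvS a p hap hl ≤ IvS a b (hap.trans hpb) hab) ≫
              limit.π (Pdiag S G (IvS a p hap hl)) ⟨IvS p p le_rfl hm, hppap⟩ :=
          (Pmap_π S G (I := IvS a p hap hl) (I' := IvS a b (hap.trans hpb) hab)
            (leS le_rfl hpb) ⟨IvS p p le_rfl hm, hppap⟩).symm
        rw [e, e2, ← Category.assoc, ← Category.assoc, hm1]
        simp only [Pleg]
        rw [dif_neg hd, dif_neg hc]

end PAux4


section AdjAux
open Opposite
variable {D : Type*} [Category D] {S : Set NatInt}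
  [HasLimitsOfSize.{0,0} D] [HasColimitsOfSize.{0,0} D]

/-- The hom-set equivalence, forward direction. -/
noncomputable def adjTo (F : (↥S)ᵒᵖ ⥤ D) (G : ↥S ⥤ D) (α : KFun S F ⟶ G) :
    F ⟶ PFn S G where
  app I := limit.lift (Pdiag S G I.unop)
    ⟨F.obj I,
      { app := fun J => F.map (homOfLE J.2).op ≫
          colimit.ι (Kdiag S F J.1) (op ⟨J.1, le_rfl⟩) ≫ α.app J.1
        naturality := fun {J J'} f => by
          have hle : J.1 ≤ J'.1 := leOfHom f
          show 𝟙 (F.obj I) ≫ (F.map (homOfLE J'.2).op ≫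
              colimit.ι (Kdiag S F J'.1) (op ⟨J'.1, le_rfl⟩) ≫ α.app J'.1) =
            (F.map (homOfLE J.2).op ≫
              colimit.ι (Kdiag S F J.1) (op ⟨J.1, le_rfl⟩) ≫ α.app J.1) ≫
              (Pdiag S G I.unop).map f
          have hmap : (Pdiag S G I.unop).map f = G.map (homOfLE hle) := rfl
          rw [Category.id_comp, hmap]
          have hnat : α.app J.1 ≫ G.map (homOfLE hle) =
              Kmap S F hle ≫ α.app J'.1 := (α.naturality (homOfLE hle)).symm
          calc F.map (homOfLE J'.2).op ≫
                colimit.ι (Kdiag S F J'.1) (op ⟨J'.1, le_rfl⟩) ≫ α.app J'.1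
              = F.map (homOfLE (hle.trans J'.2)).op ≫
                colimit.ι (Kdiag S F J'.1) (op ⟨J.1, hle⟩) ≫ α.app J'.1 :=
                ((congrArg (fun t => F.map (homOfLE J'.2).op ≫ t)
                  (step0 F J'.1 (X := J.1) (Y := J'.1) hle le_rfl hle
                    (α.app J'.1))).symm.trans
                  (Fmap_trans' F hle J'.2
                    (colimit.ι (Kdiag S F J'.1) (op ⟨J.1, hle⟩) ≫ α.app J'.1)))
            _ = F.map (homOfLE (hle.trans J'.2)).op ≫
                (colimit.ι (Kdiag S F J.1) (op ⟨J.1, le_rfl⟩) ≫ Kmap S F hle) ≫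
                  α.app J'.1 := by
                rw [ι_Kmap S F hle (op ⟨J.1, le_rfl⟩)]
            _ = F.map (homOfLE (hle.trans J'.2)).op ≫
                colimit.ι (Kdiag S F J.1) (op ⟨J.1, le_rfl⟩) ≫
                  (α.app J.1 ≫ G.map (homOfLE hle)) := by
                rw [hnat, Category.assoc]
            _ = (F.map (homOfLE J.2).op ≫
                colimit.ι (Kdiag S F J.1) (op ⟨J.1, le_rfl⟩) ≫ α.app J.1) ≫
                  G.map (homOfLE hle) := by
                rw [Category.assoc, Category.assoc] }⟩
  naturality {I I'} g := by
    apply limit.hom_ext; intro J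
    have hle : I'.unop ≤ I.unop := leOfHom g.unop
    have e : (PFn S G).map g ≫ limit.π (Pdiag S G I'.unop) J =
        limit.π (Pdiag S G I.unop) ⟨J.1, le_trans J.2 hle⟩ := Pmap_π S G hle J
    rw [Category.assoc, limit.lift_π, Category.assoc, e]
    erw [limit.lift_π]
    exact Fmap_trans' F J.2 hle _

/-- The hom-set equivalence, backward direction. -/
noncomputable def adjFrom (F : (↥S)ᵒᵖ ⥤ D) (G : ↥S ⥤ D) (β : F ⟶ PFn S G) :
    KFun S F ⟶ G where
  app I := colimit.desc (Kdiag S F I)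
    ⟨G.obj I,
      { app := fun J => β.app (op J.unop.1) ≫
          limit.π (Pdiag S G J.unop.1) ⟨J.unop.1, le_rfl⟩ ≫ G.map (homOfLE J.unop.2)
        naturality := fun {J J'} f => by
          have hle : J'.unop.1 ≤ J.unop.1 := leOfHom f.unop
          show (Kdiag S F I).map f ≫ (β.app (op J'.unop.1) ≫
              limit.π (Pdiag S G J'.unop.1) ⟨J'.unop.1, le_rfl⟩ ≫
                G.map (homOfLE J'.unop.2)) =
            (β.app (op J.unop.1) ≫
              limit.π (Pdiag S G J.unop.1) ⟨J.unop.1, le_rfl⟩ ≫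
                G.map (homOfLE J.unop.2)) ≫ 𝟙 (G.obj I)
          have hnat : (Kdiag S F I).map f ≫ β.app (op J'.unop.1) =
              β.app (op J.unop.1) ≫ Pmap S G hle :=
            β.naturality (homOfLE hle).op
          rw [Category.comp_id]
          calc (Kdiag S F I).map f ≫ β.app (op J'.unop.1) ≫
              limit.π (Pdiag S G J'.unop.1) ⟨J'.unop.1, le_rfl⟩ ≫
                G.map (homOfLE J'.unop.2)
              = (β.app (op J.unop.1) ≫ Pmap S G hle) ≫
                limit.π (Pdiag S G J'.unop.1) ⟨J'.unop.1, le_rfl⟩ ≫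
                  G.map (homOfLE J'.unop.2) := by rw [← Category.assoc, hnat]
            _ = β.app (op J.unop.1) ≫
                (Pmap S G hle ≫ limit.π (Pdiag S G J'.unop.1) ⟨J'.unop.1, le_rfl⟩) ≫
                  G.map (homOfLE J'.unop.2) := by
                rw [Category.assoc, ← Category.assoc (Pmap S G hle)]
            _ = β.app (op J.unop.1) ≫
                limit.π (Pdiag S G J.unop.1) ⟨J'.unop.1, hle⟩ ≫
                  G.map (homOfLE J'.unop.2) := by
                rw [Pmap_π S G hle ⟨J'.unop.1, le_rfl⟩]
            _ = (β.app (op J.unop.1) ≫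
                limit.π (Pdiag S G J.unop.1) ⟨J'.unop.1, hle⟩) ≫
                  G.map (homOfLE (hle.trans J.unop.2)) := by rw [Category.assoc]
            _ = (β.app (op J.unop.1) ≫
                limit.π (Pdiag S G J.unop.1) ⟨J.unop.1, le_rfl⟩) ≫
                  G.map (homOfLE J.unop.2) :=
                stepP G J.unop.1 hle le_rfl hle J.unop.2 (β.app (op J.unop.1))
            _ = β.app (op J.unop.1) ≫
                limit.π (Pdiag S G J.unop.1) ⟨J.unop.1, le_rfl⟩ ≫
                  G.map (homOfLE J.unop.2) := by rw [Category.assoc] }⟩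
  naturality {I I'} f := by
    apply colimit.hom_ext; intro J
    have hle : I ≤ I' := leOfHom f
    have e : colimit.ι (Kdiag S F I) J ≫ (KFun S F).map f =
        colimit.ι (Kdiag S F I') (op ⟨J.unop.1, le_trans J.unop.2 hle⟩) :=
      ι_Kmap S F hle J
    have hf : G.map f = G.map (homOfLE hle) := rfl
    rw [← Category.assoc, e, colimit.ι_desc, ← Category.assoc, colimit.ι_desc, hf]
    rw [Category.assoc, Category.assoc, Gmap_trans]

end AdjAux

section AdjAux2
open Opposite
variable {D : Type*} [Category D] {S : Set NatInt}
  [HasLimitsOfSize.{0,0} D] [HasColimitsOfSize.{0,0} D]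
  (F : (↥S)ᵒᵖ ⥤ D) (G : ↥S ⥤ D)

lemma adjTo_π (α : KFun S F ⟶ G) (I : (↥S)ᵒᵖ) (J : below S I.unop) :
    (adjTo F G α).app I ≫ limit.π (Pdiag S G I.unop) J =
      F.map (homOfLE J.2).op ≫
        colimit.ι (Kdiag S F J.1) (op ⟨J.1, le_rfl⟩) ≫ α.app J.1 :=
  limit.lift_π _ _

lemma adjFrom_ι (β : F ⟶ PFn S G) (I : ↥S) (J : (below S I)ᵒᵖ) :
    colimit.ι (Kdiag S F I) J ≫ (adjFrom F G β).app I =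
      β.app (op J.unop.1) ≫ limit.π (Pdiag S G J.unop.1) ⟨J.unop.1, le_rfl⟩ ≫
        G.map (homOfLE J.unop.2) :=
  colimit.ι_desc _ _

lemma adj_left_inv (α : KFun S F ⟶ G) : adjFrom F G (adjTo F G α) = α := by
  apply NatTrans.ext; funext I
  apply colimit.hom_ext; intro J
  have h0 : (adjTo F G α).app (op J.unop.1) ≫
        limit.π (Pdiag S G J.unop.1) ⟨J.unop.1, le_rfl⟩ =
      F.map (homOfLE (le_refl J.unop.1)).op ≫
        colimit.ι (Kdiag S F J.unop.1) (op ⟨J.unop.1, le_rfl⟩) ≫ α.app J.unop.1 :=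
    adjTo_π F G α (op J.unop.1) ⟨J.unop.1, le_rfl⟩
  rw [adjFrom_ι, ← Category.assoc, h0]
  have h1 : F.map (homOfLE (le_refl J.unop.1)).op = 𝟙 (F.obj (op J.unop.1)) :=
    F.map_id _
  rw [h1, Category.id_comp]
  have h2 : α.app J.unop.1 ≫ G.map (homOfLE J.unop.2) =
      Kmap S F J.unop.2 ≫ α.app I := (α.naturality (homOfLE J.unop.2)).symm
  rw [Category.assoc, h2, ← Category.assoc]
  have h3 : colimit.ι (Kdiag S F J.unop.1) (op ⟨J.unop.1, le_rfl⟩) ≫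
      Kmap S F J.unop.2 = colimit.ι (Kdiag S F I) J :=
    ι_Kmap S F J.unop.2 (op ⟨J.unop.1, le_rfl⟩)
  rw [h3]

lemma adj_right_inv (β : F ⟶ PFn S G) : adjTo F G (adjFrom F G β) = β := by
  apply NatTrans.ext; funext I
  apply limit.hom_ext; intro J
  rw [adjTo_π]
  have h : colimit.ι (Kdiag S F J.1) (op ⟨J.1, le_rfl⟩) ≫
      (adjFrom F G β).app J.1 =
    β.app (op J.1) ≫ limit.π (Pdiag S G J.1) ⟨J.1, le_rfl⟩ ≫
      G.map (homOfLE (le_refl J.1)) := adjFrom_ι F G β J.1 (op ⟨J.1, le_rfl⟩)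
  rw [h]
  have h1 : limit.π (Pdiag S G J.1) ⟨J.1, le_rfl⟩ ≫ G.map (homOfLE (le_refl J.1)) =
      limit.π (Pdiag S G J.1) ⟨J.1, le_rfl⟩ := by
    have : G.map (homOfLE (le_refl J.1)) = 𝟙 (G.obj J.1) := G.map_id _
    rw [this]; exact Category.comp_id _
  rw [h1]
  have h2 : F.map (homOfLE J.2).op ≫ β.app (op J.1) =
      β.app I ≫ Pmap S G J.2 := β.naturality (homOfLE J.2).op
  rw [← Category.assoc, h2, Category.assoc]
  have h3 : Pmap S G J.2 ≫ limit.π (Pdiag S G J.1) ⟨J.1, le_rfl⟩ =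
      limit.π (Pdiag S G I.unop) J := Pmap_π S G J.2 ⟨J.1, le_rfl⟩
  rw [h3]

end AdjAux2

section AdjAux3
open Opposite
variable {D : Type*} [Category D] {S : Set NatInt}
  [HasLimitsOfSize.{0,0} D] [HasColimitsOfSize.{0,0} D]

lemma Kmor_id (F : (↥S)ᵒᵖ ⥤ D) : Kmor S (𝟙 F) = 𝟙 (KFun S F) := by
  apply NatTrans.ext; funext I
  apply colimit.hom_ext; intro J
  rw [show (Kmor S (𝟙 F)).app I = KmorApp S (𝟙 F) I from rfl, ι_KmorApp]
  show 𝟙 _ ≫ colimit.ι (Kdiag S F I) J = _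
  rw [Category.id_comp]
  exact (Category.comp_id _).symm

lemma Kmor_comp {F F' F'' : (↥S)ᵒᵖ ⥤ D} (η : F ⟶ F') (θ : F' ⟶ F'') :
    Kmor S (η ≫ θ) = Kmor S η ≫ Kmor S θ := by
  apply NatTrans.ext; funext I
  apply colimit.hom_ext; intro J
  rw [show (Kmor S (η ≫ θ)).app I = KmorApp S (η ≫ θ) I from rfl, ι_KmorApp]
  show _ = colimit.ι (Kdiag S F I) J ≫ KmorApp S η I ≫ KmorApp S θ I
  rw [← Category.assoc, ι_KmorApp, Category.assoc, ι_KmorApp, ← Category.assoc]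
  rfl

lemma Pmor_id (G : ↥S ⥤ D) : Pmor S (𝟙 G) = 𝟙 (PFn S G) := by
  apply NatTrans.ext; funext I
  apply limit.hom_ext; intro J
  rw [show (Pmor S (𝟙 G)).app I = PmorApp S (𝟙 G) I.unop from rfl, PmorApp_π]
  show limit.π (Pdiag S G I.unop) J ≫ 𝟙 _ = _
  rw [Category.comp_id]
  exact (Category.id_comp _).symm

lemma Pmor_comp {G G' G'' : ↥S ⥤ D} (η : G ⟶ G') (θ : G' ⟶ G'') :
    Pmor S (η ≫ θ) = Pmor S η ≫ Pmor S θ := by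
  apply NatTrans.ext; funext I
  apply limit.hom_ext; intro J
  rw [show (Pmor S (η ≫ θ)).app I = PmorApp S (η ≫ θ) I.unop from rfl, PmorApp_π]
  show _ = (PmorApp S η I.unop ≫ PmorApp S θ I.unop) ≫ limit.π (Pdiag S G'' I.unop) J
  rw [Category.assoc, PmorApp_π, ← Category.assoc, PmorApp_π, Category.assoc]
  rfl

lemma adj_nat_left {F' F : (↥S)ᵒᵖ ⥤ D} {G : ↥S ⥤ D}
    (f : F' ⟶ F) (g : F ⟶ PFn S G) :
    adjFrom F' G (f ≫ g) = Kmor S f ≫ adjFrom F G g := by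
  apply NatTrans.ext; funext I
  apply colimit.hom_ext; intro J
  rw [adjFrom_ι]
  show _ = colimit.ι (Kdiag S F' I) J ≫ KmorApp S f I ≫ (adjFrom F G g).app I
  have e : colimit.ι (Kdiag S F' I) J ≫ KmorApp S f I =
      f.app (op J.unop.1) ≫ colimit.ι (Kdiag S F I) J := ι_KmorApp S f I J
  rw [← Category.assoc (colimit.ι (Kdiag S F' I) J), e, Category.assoc, adjFrom_ι]
  simp only [NatTrans.comp_app, Category.assoc]

lemma adj_nat_right {F : (↥S)ᵒᵖ ⥤ D} {G G' : ↥S ⥤ D}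
    (f : KFun S F ⟶ G) (g : G ⟶ G') :
    adjTo F G' (f ≫ g) = adjTo F G f ≫ Pmor S g := by
  apply NatTrans.ext; funext I
  apply limit.hom_ext; intro J
  rw [adjTo_π]
  show _ = ((adjTo F G f).app I ≫ PmorApp S g I.unop) ≫ limit.π (Pdiag S G' I.unop) J
  rw [Category.assoc, PmorApp_π, ← Category.assoc ((adjTo F G f).app I), adjTo_π]
  simp only [NatTrans.comp_app, Category.assoc]

end AdjAux3

section Final
open Opposite
variable {D : Type*} [Category D]
  [HasLimitsOfSize.{0,0} D] [HasColimitsOfSize.{0,0} D]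

/-- The functor `K : Pe(S,D) ⥤ Cu(S,D)`. -/
noncomputable def Kfunctor (S : Set NatInt) (hS : SupClosed' S) :
    Pe S D ⥤ Cu S D where
  obj F := ⟨KFun S F.obj,
    fun _ _ _ hap hpb hab hl hm hr =>
      K_pushout F.obj hap hpb hab hl hm hr hS⟩
  map {F F'} η := ⟨Kmor S η.hom⟩
  map_id F := InducedCategory.hom_ext (Kmor_id F.obj)
  map_comp η θ := InducedCategory.hom_ext (Kmor_comp η.hom θ.hom)

/-- The functor `P : Cu(S,D) ⥤ Pe(S,D)`. -/
noncomputable def Pfunctor (S : Set NatInt) (hS : SupClosed' S) :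
    Cu S D ⥤ Pe S D where
  obj G := ⟨PFn S G.obj,
    fun _ _ _ hap hpb hab hl hm hr =>
      P_pullback G.obj hap hpb hab hl hm hr hS⟩
  map {G G'} η := ⟨Pmor S η.hom⟩
  map_id G := InducedCategory.hom_ext (Pmor_id G.obj)
  map_comp η θ := InducedCategory.hom_ext (Pmor_comp η.hom θ.hom)

/-- The adjunction `K ⊣ P`. -/
noncomputable def KPadj (S : Set NatInt) (hS : SupClosed' S) :
    Kfunctor (D := D) S hS ⊣ Pfunctor S hS :=
  Adjunction.mkOfHomEquiv
    { homEquiv := fun F G =>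
        { toFun := fun α => ⟨adjTo F.obj G.obj α.hom⟩
          invFun := fun β => ⟨adjFrom F.obj G.obj β.hom⟩
          left_inv := fun α => InducedCategory.hom_ext (adj_left_inv F.obj G.obj α.hom)
          right_inv := fun β => InducedCategory.hom_ext (adj_right_inv F.obj G.obj β.hom) }
      homEquiv_naturality_left_symm := fun f g => InducedCategory.hom_ext (adj_nat_left f.hom g.hom)
      homEquiv_naturality_right := fun f g => InducedCategory.hom_ext (adj_nat_right f.hom g.hom) }

end Final
/-- Adjunction between the persistent and cumulative perspectives: for a
finite time category `S` and a category `D` with limits and colimits, the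
functor `K : Pe(S,D) ⥤ Cu(S,D)` (colimit over subintervals) is left adjoint
to the functor `P : Cu(S,D) ⥤ Pe(S,D)` (limit over subintervals). -/
theorem persistent_cumulative_adjunction
    {D : Type*} [Category D]
    [HasLimitsOfSize.{0, 0} D] [HasColimitsOfSize.{0, 0} D]
    (S : Set NatInt) (hfin : S.Finite) (hS : SupClosed' S) :
    ∃ (K : Pe S D ⥤ Cu S D) (P : Cu S D ⥤ Pe S D),
      (∀ (F : Pe S D) (I : ↥S),
        Nonempty ((K.obj F).obj.obj I ≅ colimit ((belowIncl S I).op ⋙ F.obj))) ∧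
      (∀ (G : Cu S D) (I : ↥S),
        Nonempty ((P.obj G).obj.obj (Opposite.op I) ≅ limit (belowIncl S I ⋙ G.obj))) ∧
      Nonempty (K ⊣ P) := by
  exact ⟨Kfunctor S hS, Pfunctor S hS,
    fun F I => ⟨Iso.refl _⟩, fun G I => ⟨Iso.refl _⟩, ⟨KPadj S hS⟩⟩
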